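/- arXiv:0709.3790 — 3 statements merged into one kernel-verified Lean document; each statement's English description precedes it below -/
import Mathlib

section
/- Let E be a real inner product space, let D be a continuous linear automorphism of E, and let w, v ∈ E with ‖w‖ = ‖v‖ = 1. Then 2·sin(∠(Dw, Dv)/2) ≤ ‖D‖·‖D⁻¹‖·‖w − v‖, where ‖D‖ and ‖D⁻¹‖ are operator norms. -/
open InnerProductGeometry

/-- For a continuous linear automorphism `D` of a real inner product space and
unit vectors `w`, `v`, one has `2 sin(∠(Dw, Dv)/2) ≤ ‖D‖·‖D⁻¹‖·‖w − v‖`. -/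
theorem two_sin_half_angle_le_distortion_mul_dist
    {E : Type*} [NormedAddCommGroup E] [InnerProductSpace ℝ E]
    (D : E ≃L[ℝ] E) {w v : E} (hw : ‖w‖ = 1) (hv : ‖v‖ = 1) :
    2 * Real.sin (angle (D w) (D v) / 2) ≤
      ‖(D : E →L[ℝ] E)‖ * ‖(D.symm : E →L[ℝ] E)‖ * ‖w - v‖ := by
  set M := ‖(D : E →L[ℝ] E)‖ with hM
  set m := ‖(D.symm : E →L[ℝ] E)‖ with hm
  set a := ‖D w‖ with haa
  set b := ‖D v‖ with hbb
  set d := ‖w - v‖ with hd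
  set p : ℝ := inner ℝ (D w) (D v) with hp
  -- 1 ≤ m * a and 1 ≤ m * b
  have h1 : 1 ≤ m * a := by
    have := (D.symm : E →L[ℝ] E).le_opNorm (D w)
    simpa [hw] using this
  have h2 : 1 ≤ m * b := by
    have := (D.symm : E →L[ℝ] E).le_opNorm (D v)
    simpa [hv] using this
  have ham : (0:ℝ) ≤ a := norm_nonneg _
  have hbm : (0:ℝ) ≤ b := norm_nonneg _
  have hmm : (0:ℝ) ≤ m := norm_nonneg _
  have hMm : (0:ℝ) ≤ M := norm_nonneg _
  have hdm : (0:ℝ) ≤ d := norm_nonneg _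
  have ha : (0:ℝ) < a := by nlinarith
  have hb : (0:ℝ) < b := by nlinarith
  -- chord bound
  have hcd : ‖D w - D v‖ ≤ M * d := by
    have : D w - D v = D (w - v) := by simp
    rw [this]
    exact (D : E →L[ℝ] E).le_opNorm _
  have hcnn : (0:ℝ) ≤ ‖D w - D v‖ := norm_nonneg _
  have hc2 : ‖D w - D v‖ ^ 2 ≤ (M * d) ^ 2 := by
    apply pow_le_pow_left₀ hcnn hcd
  -- law of cosines
  have hlaw : ‖D w - D v‖ ^ 2 = a ^ 2 + b ^ 2 - 2 * p := by
    rw [hp, haa, hbb]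
    rw [@norm_sub_sq_real]
    ring
  -- cosine of angle
  have hcos : Real.cos (angle (D w) (D v)) = p / (a * b) :=
    cos_angle (D w) (D v)
  -- sin of half angle is nonneg
  have hθ1 : 0 ≤ angle (D w) (D v) := angle_nonneg _ _
  have hθ2 : angle (D w) (D v) ≤ Real.pi := angle_le_pi _ _
  have hs : 0 ≤ Real.sin (angle (D w) (D v) / 2) :=
    Real.sin_nonneg_of_nonneg_of_le_pi (by linarith) (by linarith)
  -- square both sides
  have hsq : (2 * Real.sin (angle (D w) (D v) / 2)) ^ 2 ≤ (M * m * d) ^ 2 := by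
    have hval : (2 * Real.sin (angle (D w) (D v) / 2)) ^ 2
        = 2 - 2 * (p / (a * b)) := by
      rw [mul_pow, Real.sin_sq_eq_half_sub,
        show 2*(angle (D w) (D v)/2) = angle (D w) (D v) by ring, hcos]; ring
    rw [hval]
    have hab : (0:ℝ) < a * b := mul_pos ha hb
    rw [show (2:ℝ) - 2 * (p / (a * b)) = (2 * (a * b) - 2 * p) / (a * b) by
      field_simp]
    rw [div_le_iff₀ hab]
    have hmab : 1 ≤ m ^ 2 * (a * b) := by nlinarith
    nlinarith [sq_nonneg (a - b), sq_nonneg (M * d), sq_nonneg m,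
      mul_le_mul_of_nonneg_left hc2 (mul_nonneg (mul_nonneg hmm hmm) (mul_nonneg ham hbm))]
  have hrhs : 0 ≤ M * m * d := by positivity
  have hlhs : 0 ≤ 2 * Real.sin (angle (D w) (D v) / 2) := by linarith
  exact (pow_le_pow_iff_left₀ hlhs hrhs two_ne_zero).mp hsq
end

section
/- Let E be a real inner product space, let D be a continuous linear automorphism of E, and let w, v ∈ E with ‖w‖ = ‖v‖ = 1. Set K = ‖D‖·‖D⁻¹‖ (operator norms). If K·∠(w,v) ≤ 1, then ∠(Dw, Dv) ≤ 2K·∠(w,v). -/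
open InnerProductGeometry RealInnerProductSpace

set_option maxHeartbeats 1600000

/-- For a continuous linear automorphism `D` of a real inner product space with
quasiconformal distortion `K = ‖D‖·‖D⁻¹‖`, and unit vectors `w`, `v` with
`K·∠(w,v) ≤ 1`, the image angle satisfies `∠(Dw, Dv) ≤ 2K·∠(w,v)`. -/
theorem angle_image_le_two_distortion_mul_angle
    {E : Type*} [NormedAddCommGroup E] [InnerProductSpace ℝ E]
    (D : E ≃L[ℝ] E) {w v : E} (hw : ‖w‖ = 1) (hv : ‖v‖ = 1)
    (K : ℝ) (hK : K = ‖(D : E →L[ℝ] E)‖ * ‖(D.symm : E →L[ℝ] E)‖)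
    (hsmall : K * angle w v ≤ 1) :
    angle (D w) (D v) ≤ 2 * K * angle w v := by
  set θ := angle w v with hθ
  set φ := angle (D w) (D v) with hφ
  set N := ‖(D : E →L[ℝ] E)‖ with hN
  set M := ‖(D.symm : E →L[ℝ] E)‖ with hM
  set s := ‖D w‖ with hs
  set t := ‖D v‖ with ht
  set p : ℝ := inner ℝ (D w) (D v) with hp
  have hN0 : 0 ≤ N := norm_nonneg _
  have hM0 : 0 ≤ M := norm_nonneg _
  have hs0 : 0 ≤ s := norm_nonneg _
  have ht0 : 0 ≤ t := norm_nonneg _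
  -- lower bounds on s, t
  have hsl : 1 ≤ M * s := by
    have h1 : ‖(D.symm : E →L[ℝ] E) (D w)‖ ≤ M * ‖D w‖ :=
      ContinuousLinearMap.le_opNorm _ _
    simpa [hw] using h1
  have htl : 1 ≤ M * t := by
    have h1 : ‖(D.symm : E →L[ℝ] E) (D v)‖ ≤ M * ‖D v‖ :=
      ContinuousLinearMap.le_opNorm _ _
    simpa [hv] using h1
  have hMpos : 0 < M := by
    rcases hM0.lt_or_eq with h|h
    · exact h
    · exfalso; rw [← h, zero_mul] at hsl; linarith
  have hspos : 0 < s := by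
    rcases hs0.lt_or_eq with h|h
    · exact h
    · exfalso; rw [← h, mul_zero] at hsl; linarith
  have htpos : 0 < t := by
    rcases ht0.lt_or_eq with h|h
    · exact h
    · exfalso; rw [← h, mul_zero] at htl; linarith
  -- Cauchy-Schwarz
  have hcs : |p| ≤ s * t := abs_real_inner_le_norm _ _
  have hcs1 : -(s*t) ≤ p := by
    have := neg_abs_le p; linarith
  have hcs2 : p ≤ s * t := le_trans (le_abs_self p) hcs
  -- image difference bound
  have hab : ‖D w - D v‖ ≤ N * ‖w - v‖ := by
    have h1 : ‖(D : E →L[ℝ] E) (w - v)‖ ≤ N * ‖w - v‖ :=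
      ContinuousLinearMap.le_opNorm _ _
    simpa [map_sub] using h1
  have habsq : ‖D w - D v‖^2 ≤ N^2 * ‖w - v‖^2 := by
    have h2 : (N * ‖w - v‖)^2 = N^2 * ‖w - v‖^2 := by ring
    calc ‖D w - D v‖^2 ≤ (N * ‖w - v‖)^2 := by
          apply pow_le_pow_left₀ (norm_nonneg _) hab
      _ = N^2 * ‖w - v‖^2 := h2
  -- norms of differences
  have hDsq : ‖D w - D v‖^2 = s^2 - 2*p + t^2 := norm_sub_sq_real _ _
  have hinner_wv : (inner ℝ w v : ℝ) = Real.cos θ := by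
    have := InnerProductGeometry.cos_angle w v
    rw [hw, hv] at this
    simpa using this.symm
  have hwvsq : ‖w - v‖^2 = 2 - 2 * Real.cos θ := by
    have := norm_sub_sq_real w v
    rw [hw, hv, hinner_wv] at this
    linarith
  -- cos of image angle
  have hcosφ : Real.cos φ = p / (s * t) := by
    have := InnerProductGeometry.cos_angle (D w) (D v)
    simpa using this
  have hst : 0 < s * t := mul_pos hspos htpos
  have hkey : s * t * (1 - Real.cos φ) = s * t - p := by
    rw [hcosφ]; field_simp
  -- Dunkl–Williams type estimate
  have h1 : (s+t)^2 * (s*t - p) ≤ 2*(s*t)*(s^2 - 2*p + t^2) := by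
    have hid : 2*(s*t)*(s^2-2*p+t^2) - (s+t)^2*(s*t-p) = (s-t)^2*(s*t+p) := by ring
    have hprod : 0 ≤ (s-t)^2*(s*t+p) :=
      mul_nonneg (sq_nonneg _) (by linarith)
    linarith [hid, hprod]
  have hstp0 : 0 ≤ s*t - p := by linarith
  have hsum : 2/M ≤ s + t := by
    rw [div_le_iff₀ hMpos]
    have hexp : (s + t) * M = M * s + M * t := by ring
    linarith [hsl, htl, hexp]
  have hsumsq : (2/M)^2 ≤ (s+t)^2 := by
    apply pow_le_pow_left₀ (by positivity) hsum
  have h2 : (2/M)^2 * (s*t - p) ≤ 2*(s*t)*(N^2*(2 - 2*Real.cos θ)) := by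
    calc (2/M)^2 * (s*t - p) ≤ (s+t)^2 * (s*t - p) :=
          mul_le_mul_of_nonneg_right hsumsq hstp0
      _ ≤ 2*(s*t)*(s^2 - 2*p + t^2) := h1
      _ = 2*(s*t)*‖D w - D v‖^2 := by rw [hDsq]
      _ ≤ 2*(s*t)*(N^2 * ‖w - v‖^2) := by
          apply mul_le_mul_of_nonneg_left habsq (by positivity)
      _ = 2*(s*t)*(N^2*(2 - 2*Real.cos θ)) := by rw [hwvsq]
  -- hence 1 - cos φ ≤ K^2 (1 - cos θ)
  have hmain : 1 - Real.cos φ ≤ K^2 * (1 - Real.cos θ) := by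
    have hM2 : (2/M)^2 = 4/M^2 := by field_simp; ring
    have h3 : (4/M^2) * (s*t - p) ≤ 4*(s*t)*N^2*(1 - Real.cos θ) := by
      rw [← hM2]
      have he : 2*(s*t)*(N^2*(2 - 2*Real.cos θ)) = 4*(s*t)*N^2*(1 - Real.cos θ) := by
        ring
      linarith [h2, he]
    have h4 : s*t - p ≤ (s*t)*(N^2*M^2*(1 - Real.cos θ)) := by
      have hM2pos : 0 < M^2 := by positivity
      rw [← mul_le_mul_iff_of_pos_left (show (0:ℝ) < 4/M^2 by positivity)]
      calc (4/M^2) * (s*t - p) ≤ 4*(s*t)*N^2*(1 - Real.cos θ) := h3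
        _ = (4/M^2) * ((s*t)*(N^2*M^2*(1 - Real.cos θ))) := by
            field_simp
    have h5 : s*t*(1 - Real.cos φ) ≤ (s*t)*(N^2*M^2*(1 - Real.cos θ)) := by
      rw [hkey]; exact h4
    have h6 := (mul_le_mul_iff_of_pos_left hst).mp h5
    rw [hK]
    have he2 : (N*M)^2 * (1 - Real.cos θ) = N^2*M^2*(1 - Real.cos θ) := by ring
    linarith [h6, he2]
  -- half-angle conversion
  have hφ0 : 0 ≤ φ := angle_nonneg _ _
  have hφpi : φ ≤ Real.pi := angle_le_pi _ _
  have hθ0 : 0 ≤ θ := angle_nonneg _ _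
  have hθpi : θ ≤ Real.pi := angle_le_pi _ _
  have halfφ : Real.cos φ = 1 - 2 * Real.sin (φ/2)^2 := by
    have h := Real.cos_two_mul (φ/2)
    have h2 := Real.sin_sq_add_cos_sq (φ/2)
    have he : (2:ℝ) * (φ/2) = φ := by ring
    rw [he] at h
    linarith
  have halfθ : Real.cos θ = 1 - 2 * Real.sin (θ/2)^2 := by
    have h := Real.cos_two_mul (θ/2)
    have h2 := Real.sin_sq_add_cos_sq (θ/2)
    have he : (2:ℝ) * (θ/2) = θ := by ring
    rw [he] at h
    linarith
  have hK0 : 0 ≤ K := by rw [hK]; positivity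
  have hsinφ2 : Real.sin (φ/2)^2 ≤ (K * Real.sin (θ/2))^2 := by
    rw [halfφ, halfθ] at hmain
    have he3 : (K * Real.sin (θ/2))^2 = K^2 * Real.sin (θ/2)^2 := by ring
    linarith [hmain, he3]
  have hsinφnn : 0 ≤ Real.sin (φ/2) :=
    Real.sin_nonneg_of_nonneg_of_le_pi (by linarith) (by linarith)
  have hsinθnn : 0 ≤ Real.sin (θ/2) :=
    Real.sin_nonneg_of_nonneg_of_le_pi (by linarith) (by linarith)
  have hsinle : Real.sin (φ/2) ≤ K * Real.sin (θ/2) := by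
    have h := Real.sqrt_le_sqrt hsinφ2
    rwa [Real.sqrt_sq hsinφnn, Real.sqrt_sq (mul_nonneg hK0 hsinθnn)] at h
  have hsinθle : Real.sin (θ/2) ≤ θ/2 := Real.sin_le (by linarith)
  have hjordan : 2 / Real.pi * (φ/2) ≤ Real.sin (φ/2) :=
    Real.mul_le_sin (by linarith) (by linarith)
  have hpi : Real.pi ≤ 4 := by linarith [Real.pi_le_four]
  have hpipos : 0 < Real.pi := Real.pi_pos
  -- combine: φ/π ≤ K θ / 2, so φ ≤ π K θ / 2 ≤ 2 K θ
  have hchain : φ / Real.pi ≤ K * θ / 2 := by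
    have : 2 / Real.pi * (φ/2) = φ / Real.pi := by field_simp
    rw [← this]
    calc 2 / Real.pi * (φ/2) ≤ Real.sin (φ/2) := hjordan
      _ ≤ K * Real.sin (θ/2) := hsinle
      _ ≤ K * (θ/2) := mul_le_mul_of_nonneg_left hsinθle hK0
      _ = K * θ / 2 := by ring
  have hφle : φ ≤ Real.pi * (K * θ) / 2 := by
    rw [div_le_div_iff₀ hpipos (by norm_num : (0:ℝ) < 2)] at hchain
    linarith [hchain]
  have hKθ : 0 ≤ K * θ := mul_nonneg hK0 hθ0
  calc φ ≤ Real.pi * (K * θ) / 2 := hφle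
    _ ≤ 4 * (K * θ) / 2 := by
        have h := mul_le_mul_of_nonneg_right hpi hKθ
        linarith
    _ = 2 * K * θ := by ring
end

section
/- Let C be a symmetric positive definite real n×n matrix, let X be a real n×n matrix with Xᵀ C X = I, and let R be a real n×n matrix with ‖R‖ ≤ 1 in the ℓ²-operator norm. Then ‖Xᵀ (I + R)ᵀ C (I + R) X − I‖ ≤ 3 · ‖C⁻¹‖ · ‖C‖ · ‖R‖. -/
open scoped Matrix.Norms.L2Operator

lemma l2_opNorm_transpose {n : ℕ} (A : Matrix (Fin n) (Fin n) ℝ) : ‖A.transpose‖ = ‖A‖ := by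
  rw [← Matrix.conjTranspose_eq_transpose_of_trivial, Matrix.l2_opNorm_conjTranspose]

/-- If `C` is symmetric positive definite, `Xᵀ C X = 1`, and `‖R‖ ≤ 1` (ℓ²-operator
norm), then `‖Xᵀ(I+R)ᵀC(I+R)X − I‖ ≤ 3‖C⁻¹‖‖C‖‖R‖`. -/
theorem conformal_structure_perturbation_estimate
    {n : ℕ} (C X R : Matrix (Fin n) (Fin n) ℝ)
    (hC : C.PosDef) (hX : X.transpose * C * X = 1) (hR : ‖R‖ ≤ 1) :
    ‖X.transpose * (1 + R).transpose * C * (1 + R) * X - 1‖ ≤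
      3 * ‖C⁻¹‖ * ‖C‖ * ‖R‖ := by
  have hXX : X * X.transpose = C⁻¹ := by
    symm
    apply Matrix.inv_eq_left_inv
    have h := mul_eq_one_comm.mp hX
    rwa [← Matrix.mul_assoc] at h
  have hXn : ‖X‖ * ‖X‖ = ‖C⁻¹‖ := by
    rw [← hXX]
    have h := Matrix.l2_opNorm_conjTranspose_mul_self X.conjTranspose
    rw [Matrix.conjTranspose_conjTranspose, Matrix.l2_opNorm_conjTranspose,
      Matrix.conjTranspose_eq_transpose_of_trivial] at h
    exact h.symm
  have key : X.transpose * (1 + R).transpose * C * (1 + R) * X - 1 =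
      X.transpose * C * R * X + X.transpose * R.transpose * C * X
        + X.transpose * R.transpose * C * R * X := by
    rw [Matrix.transpose_add, Matrix.transpose_one]
    have h1 : X.transpose * (1 + R.transpose) * C * (1 + R) * X =
        X.transpose * C * X + (X.transpose * C * R * X + X.transpose * R.transpose * C * X
          + X.transpose * R.transpose * C * R * X) := by
      noncomm_ring
    rw [h1, hX]; abel
  rw [key]
  have mul4 : ∀ A B D E : Matrix (Fin n) (Fin n) ℝ,
      ‖A * B * D * E‖ ≤ ‖A‖ * ‖B‖ * ‖D‖ * ‖E‖ := by
    intro A B D E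
    calc ‖A * B * D * E‖ ≤ ‖A * B * D‖ * ‖E‖ := Matrix.l2_opNorm_mul _ _
      _ ≤ ‖A * B‖ * ‖D‖ * ‖E‖ := by
          gcongr; exact Matrix.l2_opNorm_mul _ _
      _ ≤ ‖A‖ * ‖B‖ * ‖D‖ * ‖E‖ := by
          gcongr; exact Matrix.l2_opNorm_mul _ _
  have hXpos : (0:ℝ) ≤ ‖X‖ := norm_nonneg _
  have hCpos : (0:ℝ) ≤ ‖C‖ := norm_nonneg _
  have hRpos : (0:ℝ) ≤ ‖R‖ := norm_nonneg _
  have h1 : ‖X.transpose * C * R * X‖ ≤ ‖X‖ * ‖C‖ * ‖R‖ * ‖X‖ := by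
    calc ‖X.transpose * C * R * X‖ ≤ ‖X.transpose‖ * ‖C‖ * ‖R‖ * ‖X‖ := mul4 _ _ _ _
      _ = ‖X‖ * ‖C‖ * ‖R‖ * ‖X‖ := by rw [l2_opNorm_transpose]
  have h2 : ‖X.transpose * R.transpose * C * X‖ ≤ ‖X‖ * ‖R‖ * ‖C‖ * ‖X‖ := by
    calc ‖X.transpose * R.transpose * C * X‖ ≤ ‖X.transpose‖ * ‖R.transpose‖ * ‖C‖ * ‖X‖ :=
          mul4 _ _ _ _
      _ = ‖X‖ * ‖R‖ * ‖C‖ * ‖X‖ := by rw [l2_opNorm_transpose, l2_opNorm_transpose]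
  have h3 : ‖X.transpose * R.transpose * C * R * X‖ ≤ ‖X‖ * ‖R‖ * ‖C‖ * ‖R‖ * ‖X‖ := by
    calc ‖X.transpose * R.transpose * C * R * X‖
        ≤ ‖X.transpose * R.transpose * C * R‖ * ‖X‖ := Matrix.l2_opNorm_mul _ _
      _ ≤ ‖X.transpose‖ * ‖R.transpose‖ * ‖C‖ * ‖R‖ * ‖X‖ := by
          gcongr; exact mul4 _ _ _ _
      _ = ‖X‖ * ‖R‖ * ‖C‖ * ‖R‖ * ‖X‖ := by rw [l2_opNorm_transpose, l2_opNorm_transpose]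
  have h3' : ‖X‖ * ‖R‖ * ‖C‖ * ‖R‖ * ‖X‖ ≤ ‖X‖ * ‖R‖ * ‖C‖ * 1 * ‖X‖ := by
    gcongr
  calc ‖X.transpose * C * R * X + X.transpose * R.transpose * C * X
        + X.transpose * R.transpose * C * R * X‖
      ≤ ‖X.transpose * C * R * X + X.transpose * R.transpose * C * X‖
        + ‖X.transpose * R.transpose * C * R * X‖ := norm_add_le _ _
    _ ≤ ‖X.transpose * C * R * X‖ + ‖X.transpose * R.transpose * C * X‖
        + ‖X.transpose * R.transpose * C * R * X‖ := by gcongr; exact norm_add_le _ _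
    _ ≤ (‖X‖ * ‖C‖ * ‖R‖ * ‖X‖) + (‖X‖ * ‖R‖ * ‖C‖ * ‖X‖) + (‖X‖ * ‖R‖ * ‖C‖ * 1 * ‖X‖) := by
        exact add_le_add (add_le_add h1 h2) (h3.trans h3')
    _ = 3 * (‖X‖ * ‖X‖) * ‖C‖ * ‖R‖ := by ring
    _ = 3 * ‖C⁻¹‖ * ‖C‖ * ‖R‖ := by rw [hXn]
end
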